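/- For all positive integers n and k: ∑_{m=0}^{min(n,k)} (m!)² S(n+1,m+1) S(k+1,m+1) = ∑_{j=0}^{k} A(k,j) ∑_{m=0}^{k+2-j} C(k+2-j, m) · (m+j-1)! · S(n, m+j-1). -/

import Mathlib

/-- Stirling numbers of the second kind: `stirling n r` is the number of
partitions of an `n`-element set into `r` non-empty blocks. -/
def stirling : ℕ → ℕ → ℕ
  | 0, 0 => 1
  | 0, _ + 1 => 0
  | _ + 1, 0 => 0
  | n + 1, r + 1 => (r + 1) * stirling n (r + 1) + stirling n r
/-- The descent set of a permutation of `Fin k`: positions `i` (with `i+1 < k`)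
such that `π i > π (i+1)`. -/
def descentSet (k : ℕ) (π : Equiv.Perm (Fin k)) : Finset (Fin (k - 1)) :=
  Finset.univ.filter fun i =>
    π ⟨i.1 + 1, by have := i.isLt; omega⟩ < π ⟨i.1, by have := i.isLt; omega⟩

/-- The Eulerian number `eulerian k j` counts permutations of `{1,…,k}`
with exactly `j - 1` descents (equivalently, `j` ascending runs). -/
def eulerian (k j : ℕ) : ℕ :=
  (Finset.univ.filter fun π : Equiv.Perm (Fin k) =>
    (descentSet k π).card + 1 = j).card

-- basic stirling lemmas
lemma stirling_eq_zero_of_lt : ∀ {n r : ℕ}, n < r → stirling n r = 0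
  | 0, 0, h => by omega
  | 0, r+1, _ => rfl
  | n+1, 0, h => by omega
  | n+1, r+1, h => by
    have h1 : n < r + 1 := by omega
    have h2 : n < r := by omega
    simp [stirling, stirling_eq_zero_of_lt h1, stirling_eq_zero_of_lt h2]

lemma stirling_self : ∀ n, stirling n n = 1
  | 0 => rfl
  | n+1 => by simp [stirling, stirling_self n, stirling_eq_zero_of_lt (Nat.lt_succ_self n)]

lemma stirling_zero_right (n : ℕ) (hn : 0 < n) : stirling n 0 = 0 := by
  obtain ⟨m, rfl⟩ := Nat.exists_eq_succ_of_ne_zero hn.ne'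
  rfl

-- descent indicator
def dInd (M : ℕ) (ρ : Equiv.Perm (Fin M)) (i : ℕ) : ℕ :=
  if h : i + 1 < M then (if ρ ⟨i+1, h⟩ < ρ ⟨i, by omega⟩ then 1 else 0) else 0

lemma cardDes_eq_sum (M : ℕ) (ρ : Equiv.Perm (Fin M)) :
    (descentSet M ρ).card = ∑ i ∈ Finset.range (M-1), dInd M ρ i := by
  rw [descentSet, Finset.card_filter, ← Fin.sum_univ_eq_sum_range (fun i => dInd M ρ i) (M-1)]
  apply Finset.sum_congr rfl
  intro i _
  have hi := i.isLt
  rw [dInd]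
  rw [dif_pos (by omega)]

lemma dInd_le (M ρ i) : dInd M ρ i ≤ 1 := by
  rw [dInd]; split <;> [split <;> simp; simp]

lemma cardDes_le (M : ℕ) (ρ : Equiv.Perm (Fin M)) : (descentSet M ρ).card ≤ M - 1 := by
  calc (descentSet M ρ).card ≤ (Finset.univ : Finset (Fin (M-1))).card := Finset.card_le_card (Finset.filter_subset _ _)
  _ = M - 1 := by simp

example : True := trivial
def insWord (N : ℕ) (τ : Equiv.Perm (Fin (N+1))) (p : Fin (N+2)) : Fin (N+2) → Fin (N+2) :=
  fun i => if h : i.1 < p.1 then (τ ⟨i.1, by omega⟩).castSucc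
    else if h2 : i.1 = p.1 then Fin.last (N+1)
    else (τ ⟨i.1 - 1, by have := i.isLt; omega⟩).castSucc

lemma insWord_lt (N τ p) (i : Fin (N+2)) (h : i.1 < p.1) :
    insWord N τ p i = (τ ⟨i.1, by omega⟩).castSucc := by rw [insWord]; simp only [dif_pos h]

lemma insWord_eq (N τ p) (i : Fin (N+2)) (h : i.1 = p.1) :
    insWord N τ p i = Fin.last (N+1) := by
  rw [insWord]; simp only [dif_neg (by omega : ¬ i.1 < p.1)]; rw [dif_pos h]

lemma insWord_gt (N τ p) (i : Fin (N+2)) (h : p.1 < i.1) :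
    insWord N τ p i = (τ ⟨i.1 - 1, by have := i.isLt; omega⟩).castSucc := by
  rw [insWord]; rw [dif_neg (by omega), dif_neg (by omega)]

lemma insWord_ne_last (N τ p) (i : Fin (N+2)) (h : i.1 ≠ p.1) :
    insWord N τ p i ≠ Fin.last (N+1) := by
  rcases Nat.lt_or_ge i.1 p.1 with hl | hg
  · rw [insWord_lt N τ p i hl]; exact (Fin.castSucc_lt_last _).ne
  · rw [insWord_gt N τ p i (by omega)]; exact (Fin.castSucc_lt_last _).ne

lemma insWord_inj (N τ p) : Function.Injective (insWord N τ p) := by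
  intro a b hab
  rcases Nat.lt_trichotomy a.1 p.1 with ha | ha | ha <;>
    rcases Nat.lt_trichotomy b.1 p.1 with hb | hb | hb
  all_goals try exact Fin.ext (by omega)
  all_goals try {
    exfalso
    first
    | exact insWord_ne_last N τ p a (by omega) (by rw [hab, insWord_eq N τ p b hb])
    | exact insWord_ne_last N τ p b (by omega) (by rw [← hab, insWord_eq N τ p a ha]) }
  all_goals {
    first
    | rw [insWord_lt N τ p a ha, insWord_lt N τ p b hb] at hab
    | rw [insWord_lt N τ p a ha, insWord_gt N τ p b hb] at hab
    | rw [insWord_gt N τ p a ha, insWord_lt N τ p b hb] at hab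
    | rw [insWord_gt N τ p a ha, insWord_gt N τ p b hb] at hab
    have h2 := congrArg Fin.val (τ.injective (Fin.castSucc_injective _ hab))
    simp only [] at h2
    first | exact Fin.ext (by omega) | omega }

noncomputable def insPerm (N : ℕ) (τ : Equiv.Perm (Fin (N+1))) (p : Fin (N+2)) :
    Equiv.Perm (Fin (N+2)) :=
  Equiv.ofBijective _ ((Finite.injective_iff_bijective).1 (insWord_inj N τ p))

lemma insPerm_apply (N τ p i) : insPerm N τ p i = insWord N τ p i := rfl

section Ins
variable (N : ℕ) (τ : Equiv.Perm (Fin (N+1))) (p : Fin (N+2))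

lemma dIns_small (i : ℕ) (h : i + 1 < p.1) :
    dInd (N+2) (insPerm N τ p) i = dInd (N+1) τ i := by
  have hp := p.isLt
  rw [dInd, dInd, dif_pos (by omega : i + 1 < N + 2), dif_pos (by omega : i + 1 < N + 1)]
  rw [insPerm_apply, insPerm_apply, insWord_lt N τ p _ (by simpa using h),
    insWord_lt N τ p _ (by simp; omega)]
  simp only [Fin.castSucc_lt_castSucc_iff, Fin.val_mk]

lemma dIns_break (i : ℕ) (hi : i < N + 1) (h : i + 1 = p.1) :
    dInd (N+2) (insPerm N τ p) i = 0 := by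
  rw [dInd, dif_pos (by omega : i + 1 < N + 2)]
  rw [insPerm_apply, insPerm_apply, insWord_eq N τ p _ (by simpa using h),
    insWord_lt N τ p _ (by simp; omega)]
  simp [Fin.lt_iff_val_lt_val]

lemma dIns_new (i : ℕ) (hi : i < N + 1) (h : i = p.1) :
    dInd (N+2) (insPerm N τ p) i = 1 := by
  rw [dInd, dif_pos (by omega : i + 1 < N + 2)]
  rw [insPerm_apply, insPerm_apply, insWord_eq N τ p ⟨i, by omega⟩ (by simpa using h),
    insWord_gt N τ p ⟨i+1, by omega⟩ (by simp; omega)]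
  rw [if_pos (Fin.castSucc_lt_last _)]

lemma dIns_big (i : ℕ) (hi : i < N + 1) (h : p.1 < i) :
    dInd (N+2) (insPerm N τ p) i = dInd (N+1) τ (i-1) := by
  rw [dInd, dInd, dif_pos (by omega : i + 1 < N + 2), dif_pos (by omega : i - 1 + 1 < N + 1)]
  rw [insPerm_apply, insPerm_apply, insWord_gt N τ p ⟨i+1, by omega⟩ (by simp; omega),
    insWord_gt N τ p ⟨i, by omega⟩ (by simp; omega)]
  simp only [Fin.castSucc_lt_castSucc_iff, Fin.val_mk]
  have e1 : (⟨i+1-1, by omega⟩ : Fin (N+1)) = ⟨i-1+1, by omega⟩ := by ext; simp only [Fin.val_mk]; omega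
  rw [e1]

end Ins

lemma dInd_top (N : ℕ) (τ : Equiv.Perm (Fin (N+1))) : dInd (N+1) τ N = 0 := by
  rw [dInd, dif_neg (by omega)]

lemma sum_dIns (N : ℕ) (τ : Equiv.Perm (Fin (N+1))) (p : Fin (N+2)) :
    ∑ i ∈ Finset.range (N+1), dInd (N+2) (insPerm N τ p) i
        + (if 1 ≤ p.1 then dInd (N+1) τ (p.1-1) else 0)
      = ∑ i ∈ Finset.range N, dInd (N+1) τ i + (if p.1 ≤ N then 1 else 0) := by
  have hq := p.isLt
  by_cases hqN : p.1 ≤ N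
  · have e0 : ∑ i ∈ Finset.range (N+1), dInd (N+2) (insPerm N τ p) i
        = ∑ i ∈ Finset.range p.1, dInd (N+2) (insPerm N τ p) i
          + ∑ i ∈ Finset.Ico p.1 (N+1), dInd (N+2) (insPerm N τ p) i :=
      (Finset.sum_range_add_sum_Ico _ (by omega)).symm
    have e1 : ∑ i ∈ Finset.Ico p.1 (N+1), dInd (N+2) (insPerm N τ p) i
        = 1 + ∑ i ∈ Finset.Ico p.1 N, dInd (N+1) τ i := by
      rw [Finset.sum_Ico_eq_sum_range, Finset.sum_Ico_eq_sum_range]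
      rw [show N + 1 - p.1 = (N - p.1) + 1 from by omega, Finset.sum_range_succ']
      have t1 : ∀ i ∈ Finset.range (N - p.1),
          dInd (N+2) (insPerm N τ p) (p.1 + (i+1)) = dInd (N+1) τ (p.1 + i) := by
        intro i hi
        simp only [Finset.mem_range] at hi
        rw [dIns_big N τ p (p.1 + (i+1)) (by omega) (by omega)]
        congr 1
      rw [Finset.sum_congr rfl t1, dIns_new N τ p (p.1 + 0) (by omega) (by omega)]
      omega
    have e2 : ∑ i ∈ Finset.range p.1, dInd (N+2) (insPerm N τ p) i
          + (if 1 ≤ p.1 then dInd (N+1) τ (p.1-1) else 0)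
        = ∑ i ∈ Finset.range p.1, dInd (N+1) τ i := by
      rcases Nat.eq_zero_or_pos p.1 with h0 | h1
      · simp [h0]
      · obtain ⟨q', hq'⟩ : ∃ q', p.1 = q' + 1 := ⟨p.1 - 1, by omega⟩
        rw [hq', Finset.sum_range_succ, Finset.sum_range_succ]
        have t2 : ∀ i ∈ Finset.range q', dInd (N+2) (insPerm N τ p) i = dInd (N+1) τ i := by
          intro i hi
          simp only [Finset.mem_range] at hi
          exact dIns_small N τ p i (by omega)
        rw [Finset.sum_congr rfl t2, dIns_break N τ p q' (by omega) (by omega), if_pos (by omega)]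
        simp
    have e3 : ∑ i ∈ Finset.range N, dInd (N+1) τ i
        = ∑ i ∈ Finset.range p.1, dInd (N+1) τ i + ∑ i ∈ Finset.Ico p.1 N, dInd (N+1) τ i :=
      (Finset.sum_range_add_sum_Ico _ (by omega)).symm
    rw [if_pos hqN]
    omega
  · have e0 : ∑ i ∈ Finset.range (N+1), dInd (N+2) (insPerm N τ p) i
        = ∑ i ∈ Finset.range N, dInd (N+1) τ i := by
      rw [Finset.sum_range_succ]
      have t2 : ∀ i ∈ Finset.range N, dInd (N+2) (insPerm N τ p) i = dInd (N+1) τ i := by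
        intro i hi
        simp only [Finset.mem_range] at hi
        exact dIns_small N τ p i (by omega)
      rw [Finset.sum_congr rfl t2, dIns_break N τ p N (by omega) (by omega)]
      simp
    rw [e0, if_pos (show 1 ≤ p.1 by omega), if_neg hqN,
      show p.1 - 1 = N from by omega, dInd_top N τ]

lemma cardDes_insPerm (N : ℕ) (τ : Equiv.Perm (Fin (N+1))) (p : Fin (N+2)) :
    (descentSet (N+2) (insPerm N τ p)).card + (if 1 ≤ p.1 then dInd (N+1) τ (p.1-1) else 0)
      = (descentSet (N+1) τ).card + (if p.1 ≤ N then 1 else 0) := by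
  rw [cardDes_eq_sum, cardDes_eq_sum]
  rw [show N + 2 - 1 = N + 1 from rfl, show N + 1 - 1 = N from rfl]
  exact sum_dIns N τ p

lemma insPerm_inj (N : ℕ) :
    Function.Injective (fun tp : Equiv.Perm (Fin (N+1)) × Fin (N+2) => insPerm N tp.1 tp.2) := by
  rintro ⟨τ, p⟩ ⟨τ', p'⟩ h
  simp only [] at h
  have hi : ∀ i, insWord N τ p i = insWord N τ' p' i := by
    intro i
    rw [← insPerm_apply, ← insPerm_apply, h]
  have hpp : p = p' := by
    by_contra hne
    have hv : p.1 ≠ p'.1 := fun hv => hne (Fin.ext hv)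
    have h1 : insWord N τ p p = Fin.last (N+1) := insWord_eq N τ p p rfl
    have h2 : insWord N τ' p' p ≠ Fin.last (N+1) := insWord_ne_last N τ' p' p hv
    exact h2 (by rw [← hi p, h1])
  subst hpp
  have hττ : τ = τ' := by
    apply Equiv.ext
    intro j
    have hj := j.isLt
    rcases Nat.lt_or_ge j.1 p.1 with hlt | hge
    · have := hi ⟨j.1, by omega⟩
      rw [insWord_lt N τ p _ (by simpa using hlt), insWord_lt N τ' p _ (by simpa using hlt)] at this
      have := Fin.castSucc_injective _ this
      simpa [Fin.eta] using this
    · have := hi ⟨j.1 + 1, by omega⟩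
      rw [insWord_gt N τ p _ (by simp; omega), insWord_gt N τ' p _ (by simp; omega)] at this
      have := Fin.castSucc_injective _ this
      have h3 : (⟨(⟨j.1+1, by omega⟩ : Fin (N+2)).1 - 1, by simp; omega⟩ : Fin (N+1)) = j := by
        ext; simp
      rwa [h3] at this
  rw [hττ]

lemma card_filter_perm_eq (N : ℕ) (P : Equiv.Perm (Fin (N+2)) → Prop) [DecidablePred P] :
    (Finset.univ.filter P).card
      = ∑ τ : Equiv.Perm (Fin (N+1)), ∑ p : Fin (N+2), if P (insPerm N τ p) then 1 else 0 := by
  have hbij : Function.Bijective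
      (fun tp : Equiv.Perm (Fin (N+1)) × Fin (N+2) => insPerm N tp.1 tp.2) := by
    rw [Fintype.bijective_iff_injective_and_card]
    refine ⟨insPerm_inj N, ?_⟩
    simp [Fintype.card_perm, Nat.factorial]
    ring
  have : (Finset.univ.filter P).card
      = (Finset.univ.filter fun tp : Equiv.Perm (Fin (N+1)) × Fin (N+2)
          => P (insPerm N tp.1 tp.2)).card := by
    apply (Finset.card_bij (fun tp _ => insPerm N tp.1 tp.2) ?_ ?_ ?_).symm
    · intro tp htp
      simp only [Finset.mem_filter, Finset.mem_univ, true_and] at htp ⊢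
      exact htp
    · intro a ha b hb hab
      exact insPerm_inj N hab
    · intro σ hσ
      obtain ⟨tp, htp⟩ := hbij.2 σ
      refine ⟨tp, ?_, htp⟩
      simp only [Finset.mem_filter, Finset.mem_univ, true_and] at hσ ⊢
      simp only [] at htp
      rw [htp]
      exact hσ
  rw [this, Finset.card_filter, ← Finset.univ_product_univ, Finset.sum_product]

lemma sum_ins_count (N j : ℕ) (τ : Equiv.Perm (Fin (N+1))) :
    ∑ p : Fin (N+2), (if (descentSet (N+2) (insPerm N τ p)).card + 1 = j then 1 else 0)
      = (if (descentSet (N+1) τ).card + 1 = j then (descentSet (N+1) τ).card + 1 else 0)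
        + (if (descentSet (N+1) τ).card + 2 = j then N + 1 - (descentSet (N+1) τ).card else 0) := by
  have hc : (descentSet (N+1) τ).card ≤ N := by
    have := cardDes_le (N+1) τ
    simpa using this
  set c := (descentSet (N+1) τ).card with hcdef
  have hra : ∀ p : Fin (N+2),
      (if 1 ≤ p.1 then dInd (N+1) τ (p.1-1) else 0) ≤ (if p.1 ≤ N then 1 else 0) := by
    intro p
    by_cases h1 : 1 ≤ p.1
    · rw [if_pos h1]
      by_cases h2 : p.1 ≤ N
      · rw [if_pos h2]; exact dInd_le (N+1) τ (p.1-1)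
      · rw [if_neg h2]
        have : p.1 - 1 = N := by have := p.isLt; omega
        rw [this, dInd_top]
    · rw [if_neg h1]
      exact Nat.zero_le _
  have hval : ∀ p : Fin (N+2),
      (if (descentSet (N+2) (insPerm N τ p)).card + 1 = j then 1 else 0)
        = (if 1 ≤ p.1 then dInd (N+1) τ (p.1-1) else 0) * (if c + 1 = j then 1 else 0)
          + ((if p.1 ≤ N then 1 else 0) - (if 1 ≤ p.1 then dInd (N+1) τ (p.1-1) else 0))
              * (if c + 2 = j then 1 else 0)
          + (1 - (if p.1 ≤ N then 1 else 0)) * (if c + 1 = j then 1 else 0) := by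
    intro p
    have heq := cardDes_insPerm N τ p
    rw [← hcdef] at heq
    have hr := hra p
    have hd := dInd_le (N+1) τ (p.1-1)
    set x := (descentSet (N+2) (insPerm N τ p)).card
    set r := (if 1 ≤ p.1 then dInd (N+1) τ (p.1-1) else 0)
    set a := (if p.1 ≤ N then 1 else 0)
    have ha : a ≤ 1 := by simp only [a]; split <;> omega
    have hr1 : r ≤ 1 := by simp only [r]; split <;> [exact hd; omega]
    -- x = c + a - r
    split_ifs with h1 h2 h3 h2 h3 h3 <;> omega
  rw [Finset.sum_congr rfl (fun p _ => hval p)]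
  rw [Finset.sum_add_distrib, Finset.sum_add_distrib, ← Finset.sum_mul, ← Finset.sum_mul,
    ← Finset.sum_mul]
  have hsum_r : ∑ p : Fin (N+2), (if 1 ≤ p.1 then dInd (N+1) τ (p.1-1) else 0) = c := by
    rw [Fin.sum_univ_eq_sum_range (fun q => if 1 ≤ q then dInd (N+1) τ (q-1) else 0) (N+2)]
    rw [Finset.sum_range_succ', if_neg (by omega)]
    have : ∀ i ∈ Finset.range (N+1),
        (if 1 ≤ i + 1 then dInd (N+1) τ (i + 1 - 1) else 0) = dInd (N+1) τ i := by
      intro i _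
      rw [if_pos (by omega)]
      congr 1
    rw [Finset.sum_congr rfl this, Finset.sum_range_succ, dInd_top, hcdef, cardDes_eq_sum]
    simp
  have hsum_a : ∑ p : Fin (N+2), (if p.1 ≤ N then 1 else 0) = N + 1 := by
    rw [Fin.sum_univ_eq_sum_range (fun q => if q ≤ N then 1 else 0) (N+2)]
    rw [Finset.sum_range_succ, if_neg (by omega)]
    have : ∀ i ∈ Finset.range (N+1), (if i ≤ N then 1 else 0) = 1 := by
      intro i hi
      simp only [Finset.mem_range] at hi
      rw [if_pos (by omega)]
    rw [Finset.sum_congr rfl this]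
    simp
  have hsum_ar : ∑ p : Fin (N+2),
      ((if p.1 ≤ N then 1 else 0) - (if 1 ≤ p.1 then dInd (N+1) τ (p.1-1) else 0)) = N + 1 - c := by
    have : ∑ p : Fin (N+2),
        ((if p.1 ≤ N then 1 else 0) - (if 1 ≤ p.1 then dInd (N+1) τ (p.1-1) else 0))
        + ∑ p : Fin (N+2), (if 1 ≤ p.1 then dInd (N+1) τ (p.1-1) else 0)
        = ∑ p : Fin (N+2), (if p.1 ≤ N then 1 else 0) := by
      rw [← Finset.sum_add_distrib]
      apply Finset.sum_congr rfl
      intro p _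
      have := hra p
      omega
    rw [hsum_r, hsum_a] at this
    omega
  have hsum_1a : ∑ p : Fin (N+2), (1 - (if p.1 ≤ N then 1 else 0)) = 1 := by
    have : ∑ p : Fin (N+2), (1 - (if p.1 ≤ N then 1 else 0))
        + ∑ p : Fin (N+2), (if p.1 ≤ N then 1 else 0) = N + 2 := by
      rw [← Finset.sum_add_distrib]
      have : ∀ p : Fin (N+2), (1 - (if p.1 ≤ N then 1 else 0)) + (if p.1 ≤ N then 1 else 0) = 1 := by
        intro p; split <;> omega
      rw [Finset.sum_congr rfl (fun p _ => this p)]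
      simp
    rw [hsum_a] at this
    omega
  rw [hsum_r, hsum_ar, hsum_1a]
  split_ifs with h1 h2 h2 <;> omega

lemma eulerian_rec (N j : ℕ) :
    eulerian (N+2) j = j * eulerian (N+1) j + (N+3-j) * eulerian (N+1) (j-1) := by
  rw [eulerian, card_filter_perm_eq N (fun π => (descentSet (N+2) π).card + 1 = j)]
  rw [Finset.sum_congr rfl (fun τ _ => sum_ins_count N j τ), Finset.sum_add_distrib]
  have h1 : ∑ τ : Equiv.Perm (Fin (N+1)),
      (if (descentSet (N+1) τ).card + 1 = j then (descentSet (N+1) τ).card + 1 else 0)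
      = j * eulerian (N+1) j := by
    rw [eulerian, Finset.card_filter, Finset.mul_sum]
    apply Finset.sum_congr rfl
    intro τ _
    split_ifs with h <;> omega
  have h2 : ∑ τ : Equiv.Perm (Fin (N+1)),
      (if (descentSet (N+1) τ).card + 2 = j then N + 1 - (descentSet (N+1) τ).card else 0)
      = (N+3-j) * eulerian (N+1) (j-1) := by
    rw [eulerian, Finset.card_filter, Finset.mul_sum]
    apply Finset.sum_congr rfl
    intro τ _
    split_ifs with h h' h' <;> omega
  rw [h1, h2]

lemma eulerian_zero_right (k : ℕ) : eulerian k 0 = 0 := by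
  rw [eulerian, Finset.card_eq_zero, Finset.filter_eq_empty_iff]
  intro π _
  omega

lemma eulerian_one (j : ℕ) : eulerian 1 j = if j = 1 then 1 else 0 := by
  have hdes : ∀ π : Equiv.Perm (Fin 1), (descentSet 1 π).card = 0 := by
    intro π
    rw [Finset.card_eq_zero]
    apply Finset.eq_empty_of_forall_notMem
    intro x
    exact absurd x.isLt (by omega)
  rw [eulerian]
  have : (Finset.univ.filter fun π : Equiv.Perm (Fin 1) => (descentSet 1 π).card + 1 = j)
      = Finset.univ.filter fun _ : Equiv.Perm (Fin 1) => 1 = j := by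
    apply Finset.filter_congr
    intro π _
    rw [hdes π]
  rw [this]
  by_cases h : j = 1
  · subst h
    simp [Finset.filter_true_of_mem]
  · rw [if_neg h, Finset.card_eq_zero, Finset.filter_eq_empty_iff]
    intro π _
    omega

lemma eulerian_eq_zero_of_gt (N j : ℕ) (h : N + 1 < j) : eulerian (N+1) j = 0 := by
  rw [eulerian, Finset.card_eq_zero, Finset.filter_eq_empty_iff]
  intro π _
  have := cardDes_le (N+1) π
  omega

lemma choose_step (j m a : ℕ) :
    j * (if j ≤ m then Nat.choose (a+1) (m-j) else 0)
      + (a+1) * (if j + 1 ≤ m then Nat.choose a (m-(j+1)) else 0)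
    = m * (if j ≤ m then Nat.choose a (m-j) else 0)
      + m * (if j+1 ≤ m then Nat.choose a (m-(j+1)) else 0) := by
  split_ifs with h1 h2
  · obtain ⟨b, hb⟩ : ∃ b, m - j = b + 1 := ⟨m - j - 1, by omega⟩
    have hb2 : m - (j+1) = b := by omega
    have hm : m = j + (b + 1) := by omega
    rw [hb, hb2, hm]
    have hpascal : Nat.choose (a+1) (b+1) = Nat.choose a b + Nat.choose a (b+1) :=
      Nat.choose_succ_succ a b
    have hsm : (a+1) * Nat.choose a b = Nat.choose (a+1) (b+1) * (b+1) :=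
      Nat.add_one_mul_choose_eq a b
    rw [hsm, hpascal]
    ring
  · rw [show m - j = 0 from by omega, Nat.choose_zero_right, Nat.choose_zero_right]
    omega
  · omega
  · simp

lemma frob : ∀ N m : ℕ, m.factorial * stirling (N+1) m
    = ∑ j ∈ Finset.range (N+2),
        eulerian (N+1) j * (if j ≤ m then Nat.choose (N+1-j) (m-j) else 0) := by
  intro N
  induction N with
  | zero =>
    intro m
    rw [Finset.sum_range_succ, Finset.sum_range_one, eulerian_zero_right, eulerian_one]
    match m with
    | 0 => simp [stirling]
    | 1 => simp [stirling]
    | m+2 =>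
      rw [stirling_eq_zero_of_lt (by omega)]
      simp [Nat.choose]
  | succ N ih =>
    intro m
    match m with
    | 0 =>
      rw [stirling_zero_right _ (by omega), Nat.mul_zero]
      symm
      apply Finset.sum_eq_zero
      intro j hj
      rcases Nat.eq_zero_or_pos j with h0 | h1
      · subst h0; rw [eulerian_zero_right]; ring
      · rw [if_neg (by omega)]; ring
    | m'+1 =>
      -- LHS decomposition
      have lhs_eq : (m'+1).factorial * stirling (N+2) (m'+1)
          = (m'+1) * ((m'+1).factorial * stirling (N+1) (m'+1))
            + (m'+1) * (m'.factorial * stirling (N+1) m') := by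
        rw [show stirling (N+2) (m'+1) = (m'+1) * stirling (N+1) (m'+1) + stirling (N+1) m'
          from rfl]
        rw [Nat.factorial_succ]
        ring
      rw [lhs_eq, ih (m'+1), ih m']
      -- RHS decomposition via eulerian_rec
      have rhs_eq : ∀ j ∈ Finset.range (N+3),
          eulerian (N+2) j * (if j ≤ m'+1 then Nat.choose (N+2-j) (m'+1-j) else 0)
          = j * eulerian (N+1) j * (if j ≤ m'+1 then Nat.choose (N+2-j) (m'+1-j) else 0)
            + (N+3-j) * eulerian (N+1) (j-1)
                * (if j ≤ m'+1 then Nat.choose (N+2-j) (m'+1-j) else 0) := by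
        intro j _
        rw [eulerian_rec]
        ring
      rw [Finset.sum_congr rfl rhs_eq, Finset.sum_add_distrib]
      -- first piece: drop j = N+2 term
      have first : ∑ j ∈ Finset.range (N+3),
          j * eulerian (N+1) j * (if j ≤ m'+1 then Nat.choose (N+2-j) (m'+1-j) else 0)
          = ∑ j ∈ Finset.range (N+2),
              j * eulerian (N+1) j * (if j ≤ m'+1 then Nat.choose (N+2-j) (m'+1-j) else 0) := by
        rw [Finset.sum_range_succ, eulerian_eq_zero_of_gt N (N+2) (by omega)]
        simp
      -- second piece: shift index
      have second : ∑ j ∈ Finset.range (N+3),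
          (N+3-j) * eulerian (N+1) (j-1)
            * (if j ≤ m'+1 then Nat.choose (N+2-j) (m'+1-j) else 0)
          = ∑ j ∈ Finset.range (N+2),
              (N+2-j) * eulerian (N+1) j
                * (if j ≤ m' then Nat.choose (N+1-j) (m'-j) else 0) := by
        rw [Finset.sum_range_succ', eulerian_zero_right]
        have : ∀ j ∈ Finset.range (N+2),
            (N+3-(j+1)) * eulerian (N+1) (j+1-1)
              * (if j+1 ≤ m'+1 then Nat.choose (N+2-(j+1)) (m'+1-(j+1)) else 0)
            = (N+2-j) * eulerian (N+1) j
                * (if j ≤ m' then Nat.choose (N+1-j) (m'-j) else 0) := by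
          intro j _
          have e1 : N+3-(j+1) = N+2-j := by omega
          have e3 : (if j+1 ≤ m'+1 then Nat.choose (N+2-(j+1)) (m'+1-(j+1)) else 0)
              = (if j ≤ m' then Nat.choose (N+1-j) (m'-j) else 0) := by
            by_cases h : j ≤ m'
            · rw [if_pos (by omega), if_pos h]
              congr 1 <;> omega
            · rw [if_neg (by omega), if_neg h]
          rw [e1, e3]
          norm_num
        rw [Finset.sum_congr rfl this]
        simp
      rw [first, second, Finset.mul_sum, Finset.mul_sum, ← Finset.sum_add_distrib,
        ← Finset.sum_add_distrib]
      apply Finset.sum_congr rfl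
      intro j hj
      simp only [Finset.mem_range] at hj
      have ha : N + 2 - j = (N + 1 - j) + 1 := by omega
      have key := choose_step j (m'+1) (N+1-j)
      rw [← ha] at key
      -- rearrange: key has j ≤ m'+1 guards; goal uses j ≤ m' on second
      have hg : (if j + 1 ≤ m'+1 then Nat.choose (N+1-j) (m'+1-(j+1)) else 0)
          = (if j ≤ m' then Nat.choose (N+1-j) (m'-j) else 0) := by
        by_cases h : j ≤ m'
        · rw [if_pos (by omega), if_pos h]
          congr 1
          omega
        · rw [if_neg (by omega), if_neg h]
      rw [hg] at key
      set A := eulerian (N+1) j with hA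
      set X := (if j ≤ m'+1 then Nat.choose (N+2-j) (m'+1-j) else 0) with hX
      set Y := (if j ≤ m'+1 then Nat.choose (N+1-j) (m'+1-j) else 0) with hY
      set Z := (if j ≤ m' then Nat.choose (N+1-j) (m'-j) else 0) with hZ
      -- key : j * X + (N+2-j) * Z = (m'+1) * Y + (m'+1) * Z
      calc (m'+1) * (A * Y) + (m'+1) * (A * Z)
          = A * ((m'+1) * Y + (m'+1) * Z) := by ring
        _ = A * (j * X + (N+2-j) * Z) := by rw [← key]
        _ = j * A * X + (N+2-j) * A * Z := by ring

def Wfun (k r : ℕ) : ℕ :=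
  ∑ j ∈ Finset.range (k+1), eulerian k j * (if j ≤ r+1 then Nat.choose (k+2-j) (r+1-j) else 0)

lemma pascal2 (a r j : ℕ) (hr : 1 ≤ r) :
    (if j ≤ r+1 then Nat.choose (a+2) (r+1-j) else 0)
      = (if j ≤ r+1 then Nat.choose a (r+1-j) else 0)
        + 2*(if j ≤ r then Nat.choose a (r-j) else 0)
        + (if j ≤ r-1 then Nat.choose a (r-1-j) else 0) := by
  rcases Nat.lt_or_ge j r with hlt | hge
  · -- j ≤ r - 1
    rw [if_pos (by omega), if_pos (by omega), if_pos (by omega), if_pos (by omega)]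
    obtain ⟨b, hb⟩ : ∃ b, r - 1 - j = b := ⟨r-1-j, rfl⟩
    rw [hb, show r - j = b + 1 from by omega, show r + 1 - j = b + 2 from by omega]
    rw [show a + 2 = (a+1)+1 from rfl, Nat.choose_succ_succ (a+1) (b+1),
      Nat.choose_succ_succ a b, Nat.choose_succ_succ a (b+1)]
    ring
  · rcases Nat.eq_or_lt_of_le hge with heq | hgt
    · -- j = r
      rw [if_pos (by omega), if_pos (by omega), if_pos (by omega), if_neg (by omega)]
      rw [show r + 1 - j = 1 from by omega, show r - j = 0 from by omega,
        Nat.choose_one_right, Nat.choose_one_right, Nat.choose_zero_right]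
    · rcases Nat.eq_or_lt_of_le hgt with heq2 | hgt2
      · -- j = r + 1
        rw [if_pos (by omega), if_pos (by omega), if_neg (by omega), if_neg (by omega)]
        rw [show r + 1 - j = 0 from by omega, Nat.choose_zero_right, Nat.choose_zero_right]
      · rw [if_neg (by omega), if_neg (by omega), if_neg (by omega), if_neg (by omega)]

lemma step3 (k r : ℕ) (hk : 1 ≤ k) (hr : 1 ≤ r) :
    (r-1).factorial * r.factorial * stirling (k+1) r
        + r.factorial^2 * stirling (k+1) (r+1)
      = r.factorial * Wfun k r := by
  obtain ⟨N, rfl⟩ : ∃ N, k = N + 1 := ⟨k - 1, by omega⟩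
  obtain ⟨r', rfl⟩ : ∃ r', r = r' + 1 := ⟨r - 1, by omega⟩
  have hW : Wfun (N+1) (r'+1)
      = (r'+2).factorial * stirling (N+1) (r'+2)
        + 2 * ((r'+1).factorial * stirling (N+1) (r'+1))
        + r'.factorial * stirling (N+1) r' := by
    rw [Wfun]
    have expand : ∀ j ∈ Finset.range (N+2),
        eulerian (N+1) j * (if j ≤ r'+2 then Nat.choose (N+3-j) (r'+2-j) else 0)
        = eulerian (N+1) j * (if j ≤ r'+2 then Nat.choose (N+1-j) (r'+2-j) else 0)
          + 2 * (eulerian (N+1) j * (if j ≤ r'+1 then Nat.choose (N+1-j) (r'+1-j) else 0))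
          + eulerian (N+1) j * (if j ≤ r' then Nat.choose (N+1-j) (r'-j) else 0) := by
      intro j hj
      simp only [Finset.mem_range] at hj
      have ha : N + 3 - j = (N+1-j) + 2 := by omega
      rw [ha]
      have := pascal2 (N+1-j) (r'+1) j (by omega)
      rw [show r'+1+1 = r'+2 from rfl, show r'+1-1 = r' from rfl] at this
      rw [this]
      ring
    have e1 : (∑ j ∈ Finset.range (N+2),
        eulerian (N+1) j * (if j ≤ r'+1+1 then Nat.choose (N+1+2-j) (r'+1+1-j) else 0))
        = ∑ j ∈ Finset.range (N+2),
        (eulerian (N+1) j * (if j ≤ r'+2 then Nat.choose (N+1-j) (r'+2-j) else 0)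
          + 2 * (eulerian (N+1) j * (if j ≤ r'+1 then Nat.choose (N+1-j) (r'+1-j) else 0))
          + eulerian (N+1) j * (if j ≤ r' then Nat.choose (N+1-j) (r'-j) else 0)) := by
      apply Finset.sum_congr rfl
      intro j hj
      rw [show N+1+2-j = N+3-j from by omega, show r'+1+1 = r'+2 from rfl]
      exact expand j hj
    rw [e1, Finset.sum_add_distrib, Finset.sum_add_distrib, ← Finset.mul_sum,
      ← frob N (r'+2), ← frob N (r'+1), ← frob N r']
  rw [hW]
  rw [show (r'+1) - 1 = r' from rfl]
  rw [show stirling (N+1+1) (r'+1) = (r'+1) * stirling (N+1) (r'+1) + stirling (N+1) r' from rfl]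
  rw [show stirling (N+1+1) (r'+1+1) = (r'+2) * stirling (N+1) (r'+2) + stirling (N+1) (r'+1)
    from rfl]
  rw [Nat.factorial_succ (r'+1), Nat.factorial_succ r']
  ring

lemma inner_reindex (n k j : ℕ) (hj1 : 1 ≤ j) (hjk : j ≤ k) :
    ∑ m ∈ Finset.range (k + 2 - j + 1),
        Nat.choose (k + 2 - j) m * Nat.factorial (m + j - 1) * stirling n (m + j - 1)
      = ∑ r ∈ Finset.range (k+2),
          (if j ≤ r+1 then Nat.choose (k+2-j) (r+1-j) else 0)
            * (r.factorial * stirling n r) := by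
  have hsplit : ∑ r ∈ Finset.range (k+2),
      (if j ≤ r+1 then Nat.choose (k+2-j) (r+1-j) else 0) * (r.factorial * stirling n r)
      = ∑ r ∈ Finset.range (j-1),
          (if j ≤ r+1 then Nat.choose (k+2-j) (r+1-j) else 0) * (r.factorial * stirling n r)
        + ∑ r ∈ Finset.Ico (j-1) (k+2),
            (if j ≤ r+1 then Nat.choose (k+2-j) (r+1-j) else 0) * (r.factorial * stirling n r) :=
    (Finset.sum_range_add_sum_Ico _ (by omega)).symm
  have hzero : ∑ r ∈ Finset.range (j-1),
      (if j ≤ r+1 then Nat.choose (k+2-j) (r+1-j) else 0) * (r.factorial * stirling n r) = 0 := by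
    apply Finset.sum_eq_zero
    intro r hr
    simp only [Finset.mem_range] at hr
    rw [if_neg (by omega)]
    ring
  rw [hsplit, hzero, Nat.zero_add, Finset.sum_Ico_eq_sum_range]
  rw [show k + 2 - (j-1) = k + 2 - j + 1 from by omega]
  apply Finset.sum_congr rfl
  intro i _
  rw [if_pos (by omega)]
  rw [show j - 1 + i + 1 - j = i from by omega, show i + j - 1 = j - 1 + i from by omega]
  ring

theorem polyBernoulli_eq_eulerian_stirling (n k : ℕ) (hn : 0 < n) (hk : 0 < k) :
    (∑ m ∈ Finset.range (min n k + 1),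
        (Nat.factorial m) ^ 2 * stirling (n + 1) (m + 1) * stirling (k + 1) (m + 1)) =
      ∑ j ∈ Finset.range (k + 1), eulerian k j *
        ∑ m ∈ Finset.range (k + 2 - j + 1),
          Nat.choose (k + 2 - j) m * Nat.factorial (m + j - 1) * stirling n (m + j - 1) := by
  -- Step A : extend summation range
  have extA : (∑ m ∈ Finset.range (min n k + 1),
        (Nat.factorial m) ^ 2 * stirling (n + 1) (m + 1) * stirling (k + 1) (m + 1))
      = ∑ m ∈ Finset.range (k + 1),
        (Nat.factorial m) ^ 2 * stirling (n + 1) (m + 1) * stirling (k + 1) (m + 1) := by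
    apply Finset.sum_subset
    · intro x hx
      simp only [Finset.mem_range] at hx ⊢
      omega
    · intro x hx hnx
      simp only [Finset.mem_range] at hx hnx
      rw [stirling_eq_zero_of_lt (show n + 1 < x + 1 by omega)]
      ring
  rw [extA]
  -- Step B : split via stirling recurrence in n
  have splitB : ∀ m ∈ Finset.range (k+1),
      (Nat.factorial m) ^ 2 * stirling (n + 1) (m + 1) * stirling (k + 1) (m + 1)
      = (m+1) * (Nat.factorial m)^2 * stirling n (m+1) * stirling (k+1) (m+1)
        + (Nat.factorial m)^2 * stirling n m * stirling (k+1) (m+1) := by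
    intro m _
    rw [show stirling (n+1) (m+1) = (m+1) * stirling n (m+1) + stirling n m from rfl]
    ring
  rw [Finset.sum_congr rfl splitB, Finset.sum_add_distrib]
  -- Step C : reindex the first piece
  have stepC : ∑ m ∈ Finset.range (k+1),
      (m+1) * (Nat.factorial m)^2 * stirling n (m+1) * stirling (k+1) (m+1)
      = ∑ r ∈ Finset.range (k+2),
          (if 1 ≤ r then (r-1).factorial * r.factorial * stirling (k+1) r * stirling n r
           else 0) := by
    symm
    rw [Finset.sum_range_succ', if_neg (by omega)]
    have : ∀ i ∈ Finset.range (k+1),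
        (if 1 ≤ i+1 then (i+1-1).factorial * (i+1).factorial * stirling (k+1) (i+1)
            * stirling n (i+1) else 0)
        = (i+1) * (Nat.factorial i)^2 * stirling n (i+1) * stirling (k+1) (i+1) := by
      intro i _
      rw [if_pos (by omega), show i+1-1 = i from rfl, Nat.factorial_succ]
      ring
    rw [Finset.sum_congr rfl this]
    simp
  -- Step D : extend the second piece
  have stepD : ∑ m ∈ Finset.range (k+1),
      (Nat.factorial m)^2 * stirling n m * stirling (k+1) (m+1)
      = ∑ r ∈ Finset.range (k+2),
          (Nat.factorial r)^2 * stirling n r * stirling (k+1) (r+1) := by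
    rw [Finset.sum_range_succ _ (k+1), stirling_eq_zero_of_lt (show k+1 < k+2 by omega)]
    ring
  rw [stepC, stepD, ← Finset.sum_add_distrib]
  -- Step E : pointwise identity with Wfun
  have stepE : ∀ r ∈ Finset.range (k+2),
      (if 1 ≤ r then (r-1).factorial * r.factorial * stirling (k+1) r * stirling n r else 0)
        + (Nat.factorial r)^2 * stirling n r * stirling (k+1) (r+1)
      = Wfun k r * (r.factorial * stirling n r) := by
    intro r _
    rcases Nat.eq_zero_or_pos r with h0 | h1
    · subst h0
      rw [if_neg (by omega), stirling_zero_right n hn]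
      ring
    · rw [if_pos (show 1 ≤ r from h1)]
      have h3 := step3 k r hk h1
      calc (r-1).factorial * r.factorial * stirling (k+1) r * stirling n r
            + (Nat.factorial r)^2 * stirling n r * stirling (k+1) (r+1)
          = ((r-1).factorial * r.factorial * stirling (k+1) r
              + r.factorial^2 * stirling (k+1) (r+1)) * stirling n r := by ring
        _ = (r.factorial * Wfun k r) * stirling n r := by rw [h3]
        _ = Wfun k r * (r.factorial * stirling n r) := by ring
  rw [Finset.sum_congr rfl stepE]
  -- Step F : transform RHS
  have stepF : ∀ j ∈ Finset.range (k+1),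
      eulerian k j * ∑ m ∈ Finset.range (k + 2 - j + 1),
          Nat.choose (k + 2 - j) m * Nat.factorial (m + j - 1) * stirling n (m + j - 1)
      = ∑ r ∈ Finset.range (k+2),
          eulerian k j * ((if j ≤ r+1 then Nat.choose (k+2-j) (r+1-j) else 0)
            * (r.factorial * stirling n r)) := by
    intro j hj
    simp only [Finset.mem_range] at hj
    rcases Nat.eq_zero_or_pos j with h0 | h1
    · subst h0
      rw [eulerian_zero_right]
      simp
    · rw [inner_reindex n k j h1 (by omega), Finset.mul_sum]
  rw [Finset.sum_congr rfl stepF, Finset.sum_comm]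
  apply Finset.sum_congr rfl
  intro r _
  rw [Wfun, Finset.sum_mul]
  apply Finset.sum_congr rfl
  intro j _
  ring
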